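/- Let b be a non-zero integer, A and B positive integers, and d ≥ 3 an integer. If n and m are positive integers with max(n,m) > 2·max(A, B, |b|), then b·n!·A^n·m!·B^m is not a d-th power of an integer, i.e., there is no integer x with b·n!·A^n·m!·B^m = x^d. -/

import Mathlib

lemma aux_not_sq_dvd_factorial {p k : ℕ} (hp : p.Prime) (hk : k < 2 * p) :
    ¬ p ^ 2 ∣ k.factorial := by
  rw [Nat.Prime.pow_dvd_factorial_iff hp (Nat.lt_succ_self _)]
  have hsum : ∑ i ∈ Finset.Ico 1 (Nat.log p k).succ, k / p ^ i ≤ 1 := by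
    have := Finset.sum_eq_single (M := ℕ) (s := Finset.Ico 1 (Nat.log p k).succ)
      (f := fun i => k / p ^ i) 1 ?_ ?_
    · rw [this, pow_one]
      exact Nat.lt_succ_iff.mp ((Nat.div_lt_iff_lt_mul hp.pos).mpr (by omega))
    · intro i hi hne
      have hi1 : 2 ≤ i := by
        simp only [Finset.mem_Ico] at hi; omega
      have : k < p ^ i := by
        calc k < 2 * p := hk
        _ ≤ p * p := by nlinarith [hp.two_le]
        _ = p ^ 2 := by ring
        _ ≤ p ^ i := Nat.pow_le_pow_right hp.pos hi1
      exact Nat.div_eq_of_lt this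
    · intro h1
      simp only [Finset.mem_Ico, Nat.succ_eq_add_one] at h1
      have hlog : Nat.log p k = 0 := by omega
      have : k < p := by
        have := Nat.lt_pow_succ_log_self hp.one_lt k
        rwa [hlog, pow_one] at this
      exact Nat.div_eq_of_lt (by simpa using this)
  omega

/-- Let `b` be a non-zero integer, `A, B` positive integers and `d ≥ 3` an
integer. If `n, m` are positive integers with `max n m > 2 * max (max A B) |b|`, then
`b * n! * A^n * m! * B^m` is not a `d`-th power of an integer. -/
theorem stmt_16 (b : ℤ) (hb : b ≠ 0) (A B : ℕ) (hA : 0 < A) (hB : 0 < B)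
    (d : ℕ) (hd : 3 ≤ d) (n m : ℕ) (hn : 0 < n) (hm : 0 < m)
    (h : 2 * max (max A B) b.natAbs < max n m) :
    ¬∃ x : ℤ, b * (n.factorial : ℤ) * (A : ℤ) ^ n * (m.factorial : ℤ) * (B : ℤ) ^ m
      = x ^ d := by
  rintro ⟨x, hx⟩
  set M := max (max A B) b.natAbs with hM
  set N := max n m with hN
  have hbpos : 0 < b.natAbs := Int.natAbs_pos.mpr hb
  have hM1 : 1 ≤ M := le_trans hbpos (le_max_right _ _)
  have hk0 : N / 2 ≠ 0 := by omega
  obtain ⟨p, hp, hkp, hp2k⟩ := Nat.exists_prime_lt_and_le_two_mul (N / 2) hk0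
  have hpN : p ≤ N := by omega
  have hN2p : N < 2 * p := by omega
  have hMp : M < p := by omega
  have hAp : A < p := lt_of_le_of_lt (le_trans (le_max_left _ _) (le_max_left _ _)) hMp
  have hBp : B < p := lt_of_le_of_lt (le_trans (le_max_right _ _) (le_max_left _ _)) hMp
  have hbp : b.natAbs < p := lt_of_le_of_lt (le_max_right _ _) hMp
  -- pass to natural numbers
  have hE : b.natAbs * n.factorial * A ^ n * m.factorial * B ^ m = x.natAbs ^ d := by
    have := congrArg Int.natAbs hx
    simpa [Int.natAbs_mul, Int.natAbs_pow] using this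
  -- p divides the product
  have hpdvd : p ∣ b.natAbs * n.factorial * A ^ n * m.factorial * B ^ m := by
    rcases max_choice n m with hc | hc
    · have : p ∣ n.factorial := Nat.dvd_factorial hp.pos (by omega)
      exact Dvd.dvd.mul_right (Dvd.dvd.mul_right (Dvd.dvd.mul_right
        (Dvd.dvd.mul_left this _) _) _) _
    · have : p ∣ m.factorial := Nat.dvd_factorial hp.pos (by omega)
      exact Dvd.dvd.mul_right (Dvd.dvd.mul_left this _) _
  -- hence p^3 divides it
  have hp3 : p ^ 3 ∣ b.natAbs * n.factorial * A ^ n * m.factorial * B ^ m := by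
    rw [hE] at hpdvd ⊢
    have hpx : p ∣ x.natAbs := hp.dvd_of_dvd_pow hpdvd
    exact dvd_trans (pow_dvd_pow p hd) (pow_dvd_pow_of_dvd hpx d)
  -- but p^3 does not divide it
  -- but p^3 can't divide: extract coprime parts
  have hndvd : ∀ c : ℕ, 0 < c → c < p → Nat.Coprime p c := by
    intro c hc0 hcp
    exact (Nat.Prime.coprime_iff_not_dvd hp).mpr fun hdvd => by
      have := Nat.le_of_dvd hc0 hdvd; omega
  have hcop : Nat.Coprime (p ^ 3) (b.natAbs * A ^ n * B ^ m) := by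
    apply Nat.Coprime.pow_left
    exact ((hndvd _ hbpos hbp).mul_right ((hndvd _ hA hAp).pow_right _)).mul_right
      ((hndvd _ hB hBp).pow_right _)
  have hfac : p ^ 3 ∣ n.factorial * m.factorial := by
    have : b.natAbs * n.factorial * A ^ n * m.factorial * B ^ m
        = (b.natAbs * A ^ n * B ^ m) * (n.factorial * m.factorial) := by ring
    rw [this] at hp3
    exact hcop.dvd_of_dvd_mul_left hp3
  have h2n : ¬ p ^ 2 ∣ n.factorial := aux_not_sq_dvd_factorial hp (by omega)
  have h2m : ¬ p ^ 2 ∣ m.factorial := aux_not_sq_dvd_factorial hp (by omega)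
  have hfn : (n.factorial).factorization p ≤ 1 := by
    by_contra hcon
    exact h2n ((Nat.Prime.pow_dvd_iff_le_factorization hp n.factorial_ne_zero).mpr (by omega))
  have hfm : (m.factorial).factorization p ≤ 1 := by
    by_contra hcon
    exact h2m ((Nat.Prime.pow_dvd_iff_le_factorization hp m.factorial_ne_zero).mpr (by omega))
  have h3 : 3 ≤ (n.factorial * m.factorial).factorization p :=
    (Nat.Prime.pow_dvd_iff_le_factorization hp
      (Nat.mul_ne_zero n.factorial_ne_zero m.factorial_ne_zero)).mp hfac
  rw [Nat.factorization_mul n.factorial_ne_zero m.factorial_ne_zero] at h3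
  simp only [Finsupp.add_apply] at h3
  omega
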